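/- Let a, b, c > 0 and let x : I → ℝ be a positive differentiable function on an interval I solving x' = a c x²/(2b + c x). Define u := 2 a x/(2b + c x), λ := 1/a − x/b, and μ := b/(a c) − 2x/c. Then on all of I: λ' = a λ − 1 + u, μ' = (c μ − b λ)·u, and b λ − c μ − x = 0; that is, (x, λ, μ, u) is a solution of the characteristic system along which the switching function σ = b λ − c μ − x vanishes identically. -/

import Mathlib

/-- If `x > 0` solves `x' = a c x²/(2b + c x)` on `I` and we set
`u = 2 a x/(2b + c x)`, `λ = 1/a - x/b`, `μ = b/(a c) - 2x/c`, then
`λ' = a λ - 1 + u`, `μ' = (c μ - b λ) u`, and `b λ - c μ - x = 0` on `I`: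
`(x, λ, μ, u)` solves the characteristic system with vanishing switching function. -/
theorem singular_arc_solution (a b c : ℝ) (ha : 0 < a) (hb : 0 < b) (hc : 0 < c)
    (I : Set ℝ) (x : ℝ → ℝ)
    (hx_pos : ∀ t ∈ I, 0 < x t)
    (hx : ∀ t ∈ I, HasDerivAt x (a * c * (x t) ^ 2 / (2 * b + c * x t)) t)
    (u lam mu : ℝ → ℝ)
    (hu : ∀ t, u t = 2 * a * x t / (2 * b + c * x t))
    (hlam : ∀ t, lam t = 1 / a - x t / b)
    (hmu : ∀ t, mu t = b / (a * c) - 2 * x t / c) :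
    (∀ t ∈ I, HasDerivAt lam (a * lam t - 1 + u t) t) ∧
    (∀ t ∈ I, HasDerivAt mu ((c * mu t - b * lam t) * u t) t) ∧
    (∀ t ∈ I, b * lam t - c * mu t - x t = 0) := by
  have hlam' : lam = fun t => 1 / a - x t / b := funext hlam
  have hmu' : mu = fun t => b / (a * c) - 2 * x t / c := funext hmu
  refine ⟨?_, ?_, ?_⟩
  · intro t ht
    have hden : (2 * b + c * x t) ≠ 0 := by
      have := hx_pos t ht; positivity
    have h : HasDerivAt lam (0 - a * c * (x t) ^ 2 / (2 * b + c * x t) / b) t := by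
      rw [hlam']
      exact (hasDerivAt_const t (1/a)).sub ((hx t ht).div_const b)
    convert h using 1
    rw [hlam t, hu t]
    have hden2 : b * 2 + x t * c ≠ 0 := by rw [mul_comm b, mul_comm (x t)]; exact hden
    field_simp
    ring
  · intro t ht
    have hden : (2 * b + c * x t) ≠ 0 := by
      have := hx_pos t ht; positivity
    have h : HasDerivAt mu (0 - 2 * (a * c * (x t) ^ 2 / (2 * b + c * x t)) / c) t := by
      rw [hmu']
      exact (hasDerivAt_const t (b/(a*c))).sub (((hx t ht).const_mul 2).div_const c)
    convert h using 1
    rw [hmu t, hlam t, hu t]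
    have hden2 : b * 2 + x t * c ≠ 0 := by rw [mul_comm b, mul_comm (x t)]; exact hden
    field_simp
    ring
  · intro t ht
    rw [hlam t, hmu t]
    field_simp; ring
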